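/- Let G be an ordered context-free grammar in which every nonterminal is useful. If G has no ε-rules and no cycles of unit rules, then G is well-ordered, i.e., for every string w the set P_G(w) of parse trees of w is well-ordered under the lexicographic order ≺_G (every nonempty subset of P_G(w) has a ≺_G-least element). -/

import Mathlib

namespace Ocfg

/-- A symbol: nonterminal or terminal. -/
inductive Sym (N T : Type) : Type
  | nt : N → Sym N T
  | tm : T → Sym N T

/-- An (ordered) context-free grammar: each nonterminal has an ordered
list of right-hand sides; `start` is the start nonterminal. -/
structure OCFG (N T : Type) : Type where
  prods : N → List (List (Sym N T))
  start : N

/-- Ordered ranked trees used as parse trees: terminal leaves, ε-leaves,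
and internal nodes labelled by a nonterminal together with the index of
the rule applied there. -/
inductive PTree (N T : Type) : Type
  | leaf : T → PTree N T
  | eps  : PTree N T
  | node : N → ℕ → List (PTree N T) → PTree N T

mutual
/-- `ParseFrom G A w t`: `t` is a parse tree with root nonterminal `A`
and yield `w`. -/
inductive ParseFrom {N T : Type} (G : OCFG N T) : N → List T → PTree N T → Prop
  | epsNode (A : N) (i : ℕ) :
      (G.prods A)[i]? = some [] →
      ParseFrom G A [] (PTree.node A i [PTree.eps])
  | node (A : N) (i : ℕ) (r : List (Sym N T)) (w : List T) (cs : List (PTree N T)) :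
      (G.prods A)[i]? = some r → r ≠ [] → ParseSeq G r w cs →
      ParseFrom G A w (PTree.node A i cs)

/-- `ParseSeq G r w cs`: the trees `cs` match, in order, the symbols of `r`,
with concatenated yield `w`. -/
inductive ParseSeq {N T : Type} (G : OCFG N T) : List (Sym N T) → List T → List (PTree N T) → Prop
  | nil : ParseSeq G [] [] []
  | consTm (a : T) (r : List (Sym N T)) (w : List T) (cs : List (PTree N T)) :
      ParseSeq G r w cs →
      ParseSeq G (Sym.tm a :: r) (a :: w) (PTree.leaf a :: cs)
  | consNt (A : N) (t : PTree N T) (wA : List T) (r : List (Sym N T)) (w : List T)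
      (cs : List (PTree N T)) :
      ParseFrom G A wA t → ParseSeq G r w cs →
      ParseSeq G (Sym.nt A :: r) (wA ++ w) (t :: cs)
end

/-- The set `P_G(w)` of parse trees of `w`. -/
def parseTrees {N T : Type} (G : OCFG N T) (w : List T) : Set (PTree N T) :=
  {t | ParseFrom G G.start w t}

/-- `n(t)`: the sequence of rule indices of `t`, in pre-order. -/
def PTree.idxSeq {N T : Type} : PTree N T → List ℕ
  | .leaf _ => []
  | .eps => []
  | .node _ i cs => i :: (cs.attach.map (fun c => PTree.idxSeq c.1)).flatten
decreasing_by
  have := List.sizeOf_lt_of_mem c.2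
  simp_wf
  omega

/-- The order `≺_G` on parse trees: lexicographic comparison of the
pre-order rule-index sequences. -/
def treeLT {N T : Type} (t₁ t₂ : PTree N T) : Prop :=
  List.Lex (· < ·) t₁.idxSeq t₂.idxSeq

/-- One-step derivation relation `⇒` of the underlying CFG. -/
def OCFG.Step {N T : Type} (G : OCFG N T) (u v : List (Sym N T)) : Prop :=
  ∃ (u₁ u₂ : List (Sym N T)) (A : N) (r : List (Sym N T)),
    r ∈ G.prods A ∧ u = u₁ ++ Sym.nt A :: u₂ ∧ v = u₁ ++ r ++ u₂

/-- `⇒*`. -/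
def OCFG.Derives {N T : Type} (G : OCFG N T) : List (Sym N T) → List (Sym N T) → Prop :=
  Relation.ReflTransGen G.Step

/-- A nonterminal is useful if it occurs in some sentential form derivable from
the start symbol and derives some terminal string. -/
def Useful {N T : Type} (G : OCFG N T) (A : N) : Prop :=
  (∃ u₁ u₂ : List (Sym N T), G.Derives [Sym.nt G.start] (u₁ ++ Sym.nt A :: u₂)) ∧
  (∃ w : List T, G.Derives [Sym.nt A] (w.map Sym.tm))

/-- `G` is cyclic if `A ⇒⁺ A` for some nonterminal `A`. -/
def Cyclic {N T : Type} (G : OCFG N T) : Prop :=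
  ∃ A : N, Relation.TransGen G.Step [Sym.nt A] [Sym.nt A]

/-- `G` has no ε-rules. -/
def NoEpsRules {N T : Type} (G : OCFG N T) : Prop :=
  ∀ (A : N) (r : List (Sym N T)), r ∈ G.prods A → r ≠ []

/-- A unit-rule step: `A → B` is a rule of `G`. -/
def UnitStep {N T : Type} (G : OCFG N T) (A B : N) : Prop :=
  [Sym.nt B] ∈ G.prods A

/-- `G` has a cycle of unit rules. -/
def HasUnitCycle {N T : Type} (G : OCFG N T) : Prop :=
  ∃ A : N, Relation.TransGen (UnitStep G) A A

/-- `G` is well-ordered: for every string `w`, every nonempty subset of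
`P_G(w)` has a `≺_G`-least element. -/
def WellOrderedG {N T : Type} (G : OCFG N T) : Prop :=
  ∀ (w : List T) (Φ : Set (PTree N T)), Φ ⊆ parseTrees G w → Φ.Nonempty →
    ∃ t ∈ Φ, ∀ t' ∈ Φ, t = t' ∨ treeLT t t'

/-- `t` is the `≺_G`-least parse tree of `w`. -/
def IsLeastTree {N T : Type} (G : OCFG N T) (w : List T) (t : PTree N T) : Prop :=
  ParseFrom G G.start w t ∧ ∀ t', ParseFrom G G.start w t' → t = t' ∨ treeLT t t'

/-- `G` has least parse trees. -/
def HasLeastTrees {N T : Type} (G : OCFG N T) : Prop :=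
  ∀ w : List T, (parseTrees G w).Nonempty → ∃ t, IsLeastTree G w t

/-- Derivations of a given length (number of steps). -/
inductive DerivesIn {N T : Type} (G : OCFG N T) : List (Sym N T) → List (Sym N T) → ℕ → Prop
  | refl (u : List (Sym N T)) : DerivesIn G u u 0
  | step (u v w : List (Sym N T)) (n : ℕ) :
      G.Step u v → DerivesIn G v w n → DerivesIn G u w (n + 1)

/-- Number of rule applications in a parse tree (= length of the
corresponding leftmost derivation). -/
def PTree.numRules {N T : Type} : PTree N T → ℕ
  | .leaf _ => 0
  | .eps => 0
  | .node _ _ cs => 1 + ((cs.attach.map (fun c => PTree.numRules c.1)).foldr (· + ·) 0)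
decreasing_by
  have := List.sizeOf_lt_of_mem c.2
  simp_wf
  omega

/-- Height of a tree: a single leaf has height 0. -/
def PTree.height {N T : Type} : PTree N T → ℕ
  | .leaf _ => 0
  | .eps => 0
  | .node _ _ cs => 1 + ((cs.attach.map (fun c => PTree.height c.1)).foldr max 0)
decreasing_by
  have := List.sizeOf_lt_of_mem c.2
  simp_wf
  omega

/-- The language of `G`. -/
def langOf {N T : Type} (G : OCFG N T) : Language T :=
  {w | ∃ t, ParseFrom G G.start w t}

variable {N T : Type} {G : OCFG N T}

theorem idxSeq_node (A : N) (i : ℕ) (cs : List (PTree N T)) :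
    (PTree.node A i cs).idxSeq = i :: (cs.map PTree.idxSeq).flatten := by
  rw [PTree.idxSeq, List.attach_map_val]

mutual
theorem yield_ne_from (hne : NoEpsRules G) (t : PTree N T) {A : N} {w : List T}
    (h : ParseFrom G A w t) : w ≠ [] := by
  cases h with
  | epsNode A i hi => exact absurd rfl (hne A [] (List.mem_of_getElem? hi))
  | node A i r w cs hi hr hseq => exact yield_ne_seq hne cs hseq hr
termination_by sizeOf t

theorem yield_ne_seq (hne : NoEpsRules G) (cs : List (PTree N T)) {r : List (Sym N T)}
    {w : List T} (h : ParseSeq G r w cs) (hr : r ≠ []) : w ≠ [] := by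
  cases h with
  | nil => exact absurd rfl hr
  | consTm a r w cs h => simp
  | consNt A t wA r w cs hf hs =>
    have := yield_ne_from hne t hf
    simp [this]
termination_by sizeOf cs
end

mutual
theorem inj_from (t : PTree N T) : ∀ {A : N} {w w' : List T} (t' : PTree N T)
    {k k' : List ℕ}, ParseFrom G A w t → ParseFrom G A w' t' →
    t.idxSeq ++ k = t'.idxSeq ++ k' → t = t' ∧ k = k' := by
  intro A w w' t' k k' h1 h2 heq
  cases h1 with
  | epsNode _ i hi =>
    cases h2 with
    | epsNode _ i' hi' =>
      simp only [idxSeq_node, List.cons_append, List.cons.injEq, List.map_cons,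
        List.map_nil, PTree.idxSeq, List.flatten_cons, List.flatten_nil,
        List.nil_append] at heq
      simp [heq.1, heq.2]
    | node _ i' r' _ cs' hi' hr' hseq' =>
      simp only [idxSeq_node, List.cons_append, List.cons.injEq] at heq
      rw [heq.1, hi'] at hi
      exact absurd (Option.some.inj hi) hr'
  | node _ i r _ cs hi hr hseq =>
    cases h2 with
    | epsNode _ i' hi' =>
      simp only [idxSeq_node, List.cons_append, List.cons.injEq] at heq
      rw [heq.1, hi'] at hi
      exact absurd (Option.some.inj hi).symm hr
    | node _ i' r' w' cs' hi' hr' hseq' =>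
      simp only [idxSeq_node, List.cons_append, List.cons.injEq] at heq
      obtain ⟨rfl, heq2⟩ := heq
      rw [hi'] at hi
      obtain rfl : r' = r := Option.some.inj hi
      obtain ⟨rfl, rfl⟩ := inj_seq cs cs' hseq hseq' heq2
      exact ⟨rfl, rfl⟩
termination_by sizeOf t

theorem inj_seq (cs : List (PTree N T)) : ∀ {r : List (Sym N T)} {w w' : List T}
    (cs' : List (PTree N T)) {k k' : List ℕ}, ParseSeq G r w cs → ParseSeq G r w' cs' →
    (cs.map PTree.idxSeq).flatten ++ k = (cs'.map PTree.idxSeq).flatten ++ k' →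
    cs = cs' ∧ k = k' := by
  intro r w w' cs' k k' h1 h2 heq
  cases h1 with
  | nil =>
    cases h2 with
    | nil => simpa using heq
  | consTm a r w cs h1' =>
    cases h2 with
    | consTm _ _ w' cs' h2' =>
      simp only [List.map_cons, List.flatten_cons, PTree.idxSeq, List.nil_append] at heq
      obtain ⟨rfl, rfl⟩ := inj_seq cs cs' h1' h2' heq
      exact ⟨rfl, rfl⟩
  | consNt A t wA r w cs hf h1' =>
    cases h2 with
    | consNt _ t' wA' _ w' cs' hf' h2' =>
      simp only [List.map_cons, List.flatten_cons, List.append_assoc] at heq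
      obtain ⟨rfl, heq2⟩ := inj_from t t' hf hf' heq
      obtain ⟨rfl, rfl⟩ := inj_seq cs cs' h1' h2' heq2
      exact ⟨rfl, rfl⟩
termination_by sizeOf cs
end

def HeadParse (G : OCFG N T) : Sym N T → List T → PTree N T → Prop
  | .tm a, w, c => w = [a] ∧ c = PTree.leaf a
  | .nt B, w, c => ParseFrom G B w c

theorem seq_cons_subset (s : Sym N T) (r' : List (Sym N T)) (w : List T) :
    {cs | ParseSeq G (s :: r') w cs} ⊆
      ⋃ i ∈ Finset.range (w.length + 1),
        (fun p : PTree N T × List (PTree N T) => p.1 :: p.2) ''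
          ({c | HeadParse G s (w.take i) c} ×ˢ {cs' | ParseSeq G r' (w.drop i) cs'}) := by
  intro cs h
  cases h with
  | consTm a _ w' cs' h' =>
    refine Set.mem_iUnion₂.mpr ⟨1, by simp, ?_⟩
    exact ⟨(PTree.leaf a, cs'), ⟨⟨rfl, rfl⟩, by simpa using h'⟩, rfl⟩
  | consNt B t wA _ w₂ cs' hf hs =>
    refine Set.mem_iUnion₂.mpr ⟨wA.length, ?_, ?_⟩
    · simp
    · refine ⟨(t, cs'), ⟨?_, ?_⟩, rfl⟩
      · show HeadParse G (Sym.nt B) ((wA ++ w₂).take wA.length) t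
        simpa [HeadParse, List.take_left] using hf
      · simpa [List.drop_left] using hs

theorem fin_seq : ∀ (r : List (Sym N T)) (w : List T),
    (∀ (B : N) (w' : List T), w'.length ≤ w.length → {t | ParseFrom G B w' t}.Finite) →
    {cs | ParseSeq G r w cs}.Finite := by
  intro r
  induction r with
  | nil =>
    intro w _
    apply Set.Finite.subset (Set.finite_singleton ([] : List (PTree N T)))
    intro cs h
    cases h
    simp
  | cons s r' IH =>
    intro w hyp
    apply Set.Finite.subset _ (seq_cons_subset s r' w)
    apply Set.Finite.biUnion (Finset.range (w.length + 1)).finite_toSet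
    intro i _
    apply Set.Finite.image
    apply Set.Finite.prod
    · cases s with
      | tm a =>
        apply Set.Finite.subset (Set.finite_singleton (PTree.leaf a))
        intro c hc
        simp [hc.2]
      | nt B => exact hyp B _ (by simp)
    · exact IH (w.drop i) (fun B w' hw' => hyp B w' (le_trans hw' (by simp)))

theorem fin_parse [Finite N] (hne : NoEpsRules G) (hnu : ¬ HasUnitCycle G) :
    ∀ (n : ℕ) (w : List T), w.length ≤ n → ∀ A : N, {t | ParseFrom G A w t}.Finite := by
  have hwf : WellFounded (fun B A : N => UnitStep G A B) := by
    have h1 : WellFounded (fun B A : N => Relation.TransGen (UnitStep G) A B) := by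
      haveI : IsTrans N (fun B A : N => Relation.TransGen (UnitStep G) A B) :=
        ⟨fun a b c h1 h2 => h2.trans h1⟩
      haveI : IsIrrefl N (fun B A : N => Relation.TransGen (UnitStep G) A B) :=
        ⟨fun a h => hnu ⟨a, h⟩⟩
      exact Finite.wellFounded_of_trans_of_irrefl _
    exact Subrelation.wf (fun {B A} h => Relation.TransGen.single h) h1
  intro n
  induction n using Nat.strong_induction_on with
  | _ n IHn =>
    intro w hw A
    induction A using hwf.induction with
    | _ A IHA =>
      have hsub : {t | ParseFrom G A w t} ⊆
          ⋃ i ∈ Finset.range (G.prods A).length,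
            (PTree.node A i) '' {cs | ∃ r, (G.prods A)[i]? = some r ∧ ParseSeq G r w cs} := by
        intro t ht
        cases ht with
        | epsNode _ i hi => exact absurd rfl (hne A [] (List.mem_of_getElem? hi))
        | node _ i r _ cs hi hr hseq =>
          exact Set.mem_iUnion₂.mpr ⟨i, by simpa using (List.getElem?_eq_some_iff.mp hi).1,
            ⟨cs, ⟨r, hi, hseq⟩, rfl⟩⟩
      apply Set.Finite.subset _ hsub
      apply Set.Finite.biUnion (Finset.range (G.prods A).length).finite_toSet
      intro i _
      apply Set.Finite.image
      rcases hg : (G.prods A)[i]? with _ | r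
      · apply Set.Finite.subset Set.finite_empty
        rintro cs ⟨r, hr, -⟩
        cases hr
      · have hset : {cs | ∃ r', some r = some r' ∧ ParseSeq G r' w cs}
            = {cs | ParseSeq G r w cs} := by
          ext cs
          simp
        rw [hset]
        rcases r with _ | ⟨s, r'⟩
        · apply Set.Finite.subset (Set.finite_singleton ([] : List (PTree N T)))
          intro cs h
          cases h
          simp
        · rcases r' with _ | ⟨s2, r''⟩
          · cases s with
            | nt B =>
              have hu : UnitStep G A B := List.mem_of_getElem? hg
              apply Set.Finite.subset ((IHA B hu).image (fun t => [t]))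
              intro cs h
              cases h with
              | consNt _ t wA _ w₂ cs₂ hf hs =>
                cases hs
                exact ⟨t, by simpa using hf, rfl⟩
            | tm a =>
              apply Set.Finite.subset (Set.finite_singleton [PTree.leaf a])
              intro cs h
              cases h with
              | consTm _ _ w' cs' h' =>
                cases h'
                simp
          · apply Set.Finite.subset _ (seq_cons_subset s (s2 :: r'') w)
            apply Set.Finite.biUnion (Finset.range (w.length + 1)).finite_toSet
            intro i' _
            by_cases h0 : i' = 0
            · subst h0
              have hemp : {c | HeadParse G s ([] : List T) c} = ∅ := by
                ext c
                simp only [Set.mem_setOf_eq, Set.mem_empty_iff_false, iff_false]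
                cases s with
                | tm a => rintro ⟨h, -⟩; cases h
                | nt B => exact fun h => yield_ne_from hne c h rfl
              rw [List.take_zero, hemp, Set.empty_prod, Set.image_empty]
              exact Set.finite_empty
            · by_cases hlt : i' < w.length
              · have hn2 : 1 ≤ i' := Nat.one_le_iff_ne_zero.mpr h0
                have hnpos : 2 ≤ n := by omega
                apply Set.Finite.image
                apply Set.Finite.prod
                · cases s with
                  | tm a =>
                    apply Set.Finite.subset (Set.finite_singleton (PTree.leaf a))
                    intro c hc
                    simp [hc.2]
                  | nt B =>
                    exact IHn (n - 1) (by omega) (w.take i')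
                      (by simp [List.length_take]; omega) B
                · exact fin_seq (s2 :: r'') (w.drop i')
                    (fun B w' hw' => IHn (n - 1) (by omega) w'
                      (by simp at hw' ⊢; omega) B)
              · have hemp : {cs' | ParseSeq G (s2 :: r'') (w.drop i') cs'} = ∅ := by
                  ext cs'
                  simp only [Set.mem_setOf_eq, Set.mem_empty_iff_false, iff_false]
                  intro h
                  have hd : w.drop i' = [] := List.drop_eq_nil_of_le (le_of_not_gt hlt)
                  rw [hd] at h
                  exact yield_ne_seq hne cs' h (by simp) rfl
                rw [hemp, Set.prod_empty, Set.image_empty]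
                exact Set.finite_empty

end Ocfg

open Ocfg

/-- An oCFG with all nonterminals useful, no ε-rules and no cycles
of unit rules is well-ordered. -/
theorem stmt3 {N T : Type} [Fintype N] [Fintype T] (G : OCFG N T)
    (huseful : ∀ A : N, Useful G A)
    (hne : NoEpsRules G) (hnu : ¬ HasUnitCycle G) :
    WellOrderedG G := by
  intro w Φ hsubΦ hnonempty
  have hfin : Φ.Finite :=
    Set.Finite.subset (fin_parse hne hnu w.length w le_rfl G.start) hsubΦ
  obtain ⟨t, htΦ, hmin⟩ := Set.exists_min_image Φ PTree.idxSeq hfin hnonempty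
  refine ⟨t, htΦ, fun t' ht' => ?_⟩
  rcases (hmin t' ht').lt_or_eq with hlt | heq
  · right
    exact hlt
  · left
    exact (inj_from t t' (k := []) (k' := []) (hsubΦ htΦ) (hsubΦ ht') (by simp [heq])).1
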